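/- Let β ∈ [0,1/4] and let u ∈ ℝ^n satisfy ∑_{j=1}^n u_j = n and 1−β ≤ u_j ≤ 1+β for all j. Then (3(1−β) + 2(1−β)ln(1−β))·n·δ(u) ≤ Δ21(u) ≤ (3(1+β) + 2(1+β)ln(1+β))·n·δ(u). -/

import Mathlib

noncomputable def G (c x : ℝ) : ℝ := x^2 * Real.log x - c * (x * Real.log x) - (1 - c) * (x - 1)
noncomputable def G1 (c x : ℝ) : ℝ := 2*x*Real.log x + x - c*(Real.log x + 1) - (1 - c)
noncomputable def G2 (c x : ℝ) : ℝ := 2*Real.log x + 3 - c/x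

lemma hasDerivAt_G (c x : ℝ) (hx : x ≠ 0) : HasDerivAt (G c) (G1 c x) x := by
  have h1 : HasDerivAt (fun x : ℝ => x^2 * Real.log x) (2*x*Real.log x + x) x := by
    have := (hasDerivAt_pow 2 x).mul (Real.hasDerivAt_log hx)
    refine this.congr_deriv ?_
    field_simp
    ring
  have h2 : HasDerivAt (fun x : ℝ => x * Real.log x) (Real.log x + 1) x := by
    have := (hasDerivAt_id x).mul (Real.hasDerivAt_log hx)
    refine this.congr_deriv ?_
    field_simp
    simp only [id]; ring
  have h3 : HasDerivAt (fun x : ℝ => (1 - c) * (x - 1)) ((1 - c) * 1) x :=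
    ((hasDerivAt_id x).sub_const 1).const_mul (1 - c)
  have := (h1.sub (h2.const_mul c)).sub h3
  refine this.congr_deriv ?_
  unfold G1; ring

lemma hasDerivAt_G1 (c x : ℝ) (hx : x ≠ 0) : HasDerivAt (G1 c) (G2 c x) x := by
  have h2 : HasDerivAt (fun x : ℝ => x * Real.log x) (Real.log x + 1) x := by
    have := (hasDerivAt_id x).mul (Real.hasDerivAt_log hx)
    refine this.congr_deriv ?_
    field_simp
    simp only [id]; ring
  have h1 : HasDerivAt (fun x : ℝ => 2*x*Real.log x) (2*(Real.log x + 1)) x := by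
    have := h2.const_mul 2
    rw [show (fun x : ℝ => 2*x*Real.log x) = fun y => 2 * (y * Real.log y) from funext fun y => by ring]
    exact this
  have h3 : HasDerivAt (fun x : ℝ => c*(Real.log x + 1)) (c * x⁻¹) x :=
    ((Real.hasDerivAt_log hx).add_const 1).const_mul c
  have := ((h1.add (hasDerivAt_id x)).sub h3).sub_const (1 - c)
  refine this.congr_deriv ?_
  unfold G2; rw [div_eq_mul_inv]; ring

lemma G1_one (c : ℝ) : G1 c 1 = 0 := by unfold G1; simp

lemma G_one (c : ℝ) : G c 1 = 0 := by unfold G; simp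

lemma G_nonpos (c q p : ℝ) (hq : 0 < q) (hq1 : q ≤ 1) (h1p : 1 ≤ p)
    (hG2 : ∀ y ∈ Set.Icc q p, G2 c y ≤ 0) :
    ∀ x ∈ Set.Icc q p, G c x ≤ 0 := by
  have hqp : q ≤ p := hq1.trans h1p
  have hne : ∀ x ∈ Set.Icc q p, x ≠ 0 := fun x hx => ne_of_gt (lt_of_lt_of_le hq hx.1)
  have hG1anti : AntitoneOn (G1 c) (Set.Icc q p) := by
    apply antitoneOn_of_deriv_nonpos (convex_Icc q p)
    · exact fun x hx => ((hasDerivAt_G1 c x (hne x hx)).differentiableAt.continuousAt).continuousWithinAt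
    · intro x hx
      rw [interior_Icc] at hx
      exact ((hasDerivAt_G1 c x (hne x ⟨hx.1.le, hx.2.le⟩)).differentiableAt).differentiableWithinAt
    · intro x hx
      rw [interior_Icc] at hx
      rw [(hasDerivAt_G1 c x (hne x ⟨hx.1.le, hx.2.le⟩)).deriv]
      exact hG2 x ⟨hx.1.le, hx.2.le⟩
  have h1mem : (1:ℝ) ∈ Set.Icc q p := ⟨hq1, h1p⟩
  have hmono : MonotoneOn (G c) (Set.Icc q 1) := by
    apply monotoneOn_of_deriv_nonneg (convex_Icc q 1)
    · intro x hx
      have hx' : x ∈ Set.Icc q p := ⟨hx.1, hx.2.trans h1p⟩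
      exact ((hasDerivAt_G c x (hne x hx')).differentiableAt.continuousAt).continuousWithinAt
    · intro x hx
      rw [interior_Icc] at hx
      have hx' : x ∈ Set.Icc q p := ⟨hx.1.le, hx.2.le.trans h1p⟩
      exact ((hasDerivAt_G c x (hne x hx')).differentiableAt).differentiableWithinAt
    · intro x hx
      rw [interior_Icc] at hx
      have hx' : x ∈ Set.Icc q p := ⟨hx.1.le, hx.2.le.trans h1p⟩
      rw [(hasDerivAt_G c x (hne x hx')).deriv]
      have := hG1anti hx' h1mem hx.2.le
      rw [G1_one] at this
      exact this
  have hanti : AntitoneOn (G c) (Set.Icc 1 p) := by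
    apply antitoneOn_of_deriv_nonpos (convex_Icc 1 p)
    · intro x hx
      have hx' : x ∈ Set.Icc q p := ⟨hq1.trans hx.1, hx.2⟩
      exact ((hasDerivAt_G c x (hne x hx')).differentiableAt.continuousAt).continuousWithinAt
    · intro x hx
      rw [interior_Icc] at hx
      have hx' : x ∈ Set.Icc q p := ⟨hq1.trans hx.1.le, hx.2.le⟩
      exact ((hasDerivAt_G c x (hne x hx')).differentiableAt).differentiableWithinAt
    · intro x hx
      rw [interior_Icc] at hx
      have hx' : x ∈ Set.Icc q p := ⟨hq1.trans hx.1.le, hx.2.le⟩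
      rw [(hasDerivAt_G c x (hne x hx')).deriv]
      have := hG1anti h1mem hx' hx.1.le
      rw [G1_one] at this
      exact this
  intro x hx
  rcases le_total x 1 with h | h
  · have := hmono ⟨hx.1, h⟩ ⟨hq1, le_refl 1⟩ h
    rwa [G_one] at this
  · have := hanti ⟨le_refl 1, h1p⟩ ⟨h, hx.2⟩ h
    rwa [G_one] at this

lemma G_nonneg (c q p : ℝ) (hq : 0 < q) (hq1 : q ≤ 1) (h1p : 1 ≤ p)
    (hG2 : ∀ y ∈ Set.Icc q p, 0 ≤ G2 c y) :
    ∀ x ∈ Set.Icc q p, 0 ≤ G c x := by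
  have hqp : q ≤ p := hq1.trans h1p
  have hne : ∀ x ∈ Set.Icc q p, x ≠ 0 := fun x hx => ne_of_gt (lt_of_lt_of_le hq hx.1)
  have hG1mono : MonotoneOn (G1 c) (Set.Icc q p) := by
    apply monotoneOn_of_deriv_nonneg (convex_Icc q p)
    · exact fun x hx => ((hasDerivAt_G1 c x (hne x hx)).differentiableAt.continuousAt).continuousWithinAt
    · intro x hx
      rw [interior_Icc] at hx
      exact ((hasDerivAt_G1 c x (hne x ⟨hx.1.le, hx.2.le⟩)).differentiableAt).differentiableWithinAt
    · intro x hx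
      rw [interior_Icc] at hx
      rw [(hasDerivAt_G1 c x (hne x ⟨hx.1.le, hx.2.le⟩)).deriv]
      exact hG2 x ⟨hx.1.le, hx.2.le⟩
  have h1mem : (1:ℝ) ∈ Set.Icc q p := ⟨hq1, h1p⟩
  have hanti : AntitoneOn (G c) (Set.Icc q 1) := by
    apply antitoneOn_of_deriv_nonpos (convex_Icc q 1)
    · intro x hx
      have hx' : x ∈ Set.Icc q p := ⟨hx.1, hx.2.trans h1p⟩
      exact ((hasDerivAt_G c x (hne x hx')).differentiableAt.continuousAt).continuousWithinAt
    · intro x hx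
      rw [interior_Icc] at hx
      have hx' : x ∈ Set.Icc q p := ⟨hx.1.le, hx.2.le.trans h1p⟩
      exact ((hasDerivAt_G c x (hne x hx')).differentiableAt).differentiableWithinAt
    · intro x hx
      rw [interior_Icc] at hx
      have hx' : x ∈ Set.Icc q p := ⟨hx.1.le, hx.2.le.trans h1p⟩
      rw [(hasDerivAt_G c x (hne x hx')).deriv]
      have := hG1mono hx' h1mem hx.2.le
      rwa [G1_one] at this
  have hmono : MonotoneOn (G c) (Set.Icc 1 p) := by
    apply monotoneOn_of_deriv_nonneg (convex_Icc 1 p)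
    · intro x hx
      have hx' : x ∈ Set.Icc q p := ⟨hq1.trans hx.1, hx.2⟩
      exact ((hasDerivAt_G c x (hne x hx')).differentiableAt.continuousAt).continuousWithinAt
    · intro x hx
      rw [interior_Icc] at hx
      have hx' : x ∈ Set.Icc q p := ⟨hq1.trans hx.1.le, hx.2.le⟩
      exact ((hasDerivAt_G c x (hne x hx')).differentiableAt).differentiableWithinAt
    · intro x hx
      rw [interior_Icc] at hx
      have hx' : x ∈ Set.Icc q p := ⟨hq1.trans hx.1.le, hx.2.le⟩
      rw [(hasDerivAt_G c x (hne x hx')).deriv]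
      have := hG1mono h1mem hx' hx.1.le
      rwa [G1_one] at this
  intro x hx
  rcases le_total x 1 with h | h
  · have := hanti ⟨hx.1, h⟩ ⟨hq1, le_refl 1⟩ h
    rwa [G_one] at this
  · have := hmono ⟨le_refl 1, h1p⟩ ⟨h, hx.2⟩ h
    rwa [G_one] at this

/-- The entropy proximity measure `δ(u) = (1/n) ∑ u_j ln u_j`. -/
noncomputable def entropyDelta (n : ℕ) (u : Fin n → ℝ) : ℝ :=
  (1 / (n : ℝ)) * ∑ j, u j * Real.log (u j)

/-- `Δ21(u) = ∑ u_j² ln u_j`. -/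
noncomputable def Delta21 (n : ℕ) (u : Fin n → ℝ) : ℝ :=
  ∑ j, (u j) ^ 2 * Real.log (u j)

theorem stmt_5 (n : ℕ) (hn : 1 ≤ n) (β : ℝ) (hβ0 : 0 ≤ β) (hβ1 : β ≤ 1 / 4)
    (u : Fin n → ℝ) (hsum : ∑ j, u j = (n : ℝ))
    (hlb : ∀ j, 1 - β ≤ u j) (hub : ∀ j, u j ≤ 1 + β) :
    (3 * (1 - β) + 2 * (1 - β) * Real.log (1 - β)) * n * entropyDelta n u ≤ Delta21 n u ∧
      Delta21 n u ≤ (3 * (1 + β) + 2 * (1 + β) * Real.log (1 + β)) * n * entropyDelta n u := by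
  set q : ℝ := 1 - β with hqdef
  set p : ℝ := 1 + β with hpdef
  have hq : (0:ℝ) < q := by simp only [hqdef]; linarith
  have hq34 : (3:ℝ)/4 ≤ q := by simp only [hqdef]; linarith
  have hq1 : q ≤ 1 := by simp only [hqdef]; linarith
  have h1p : (1:ℝ) ≤ p := by simp only [hpdef]; linarith
  set cm : ℝ := 3 * q + 2 * q * Real.log q with hcm
  set cp : ℝ := 3 * p + 2 * p * Real.log p with hcp
  have hlogq : (-1)/3 ≤ Real.log q := by
    have h1 : Real.log q⁻¹ ≤ q⁻¹ - 1 := Real.log_le_sub_one_of_pos (by positivity)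
    have h2 : q⁻¹ ≤ 4/3 := by
      rw [inv_le_comm₀ hq (by norm_num)]
      linarith
    rw [Real.log_inv] at h1
    linarith
  have hlogp : 0 ≤ Real.log p := Real.log_nonneg h1p
  have hcm0 : 0 ≤ cm := by
    rw [hcm]
    nlinarith
  have hcp0 : 0 ≤ cp := by
    rw [hcp]
    nlinarith
  -- G2 sign conditions
  have hG2m : ∀ y ∈ Set.Icc q p, 0 ≤ G2 cm y := by
    intro y hy
    have hy0 : 0 < y := lt_of_lt_of_le hq hy.1
    have hdiv : cm / y ≤ cm / q := div_le_div_of_nonneg_left hcm0 hq hy.1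
    have hcq : cm / q = 3 + 2 * Real.log q := by
      rw [hcm]; field_simp
    have hlog : Real.log q ≤ Real.log y := Real.log_le_log hq hy.1
    unfold G2
    rw [hcq] at hdiv
    linarith
  have hG2p : ∀ y ∈ Set.Icc q p, G2 cp y ≤ 0 := by
    intro y hy
    have hy0 : 0 < y := lt_of_lt_of_le hq hy.1
    have hp0 : (0:ℝ) < p := lt_of_lt_of_le one_pos h1p
    have hdiv : cp / p ≤ cp / y := div_le_div_of_nonneg_left hcp0 hy0 hy.2
    have hcq : cp / p = 3 + 2 * Real.log p := by
      rw [hcp]; field_simp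
    have hlog : Real.log y ≤ Real.log p := Real.log_le_log hy0 hy.2
    unfold G2
    rw [hcq] at hdiv
    linarith
  -- pointwise inequalities
  have hmem : ∀ j, u j ∈ Set.Icc q p := fun j => ⟨hlb j, hub j⟩
  have keyL : ∀ j, cm * (u j * Real.log (u j)) + (1 - cm) * (u j - 1) ≤ (u j)^2 * Real.log (u j) := by
    intro j
    have := G_nonneg cm q p hq hq1 h1p hG2m (u j) (hmem j)
    unfold G at this; linarith
  have keyU : ∀ j, (u j)^2 * Real.log (u j) ≤ cp * (u j * Real.log (u j)) + (1 - cp) * (u j - 1) := by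
    intro j
    have := G_nonpos cp q p hq hq1 h1p hG2p (u j) (hmem j)
    unfold G at this; linarith
  have hnne : (n:ℝ) ≠ 0 := by positivity
  have hsublin : ∀ c : ℝ, ∑ j, (c * (u j * Real.log (u j)) + (1 - c) * (u j - 1))
      = c * ∑ j, u j * Real.log (u j) := by
    intro c
    rw [Finset.sum_add_distrib, ← Finset.mul_sum, ← Finset.mul_sum, Finset.sum_sub_distrib,
      hsum, Finset.sum_const, Finset.card_univ, Fintype.card_fin]
    simp
  have hED : (n:ℝ) * entropyDelta n u = ∑ j, u j * Real.log (u j) := by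
    unfold entropyDelta
    field_simp
  constructor
  · have h1 := Finset.sum_le_sum (fun j (_ : j ∈ Finset.univ) => keyL j)
    rw [hsublin] at h1
    unfold Delta21
    calc (3 * (1 - β) + 2 * (1 - β) * Real.log (1 - β)) * n * entropyDelta n u
        = cm * ((n:ℝ) * entropyDelta n u) := by rw [hcm, hqdef]; ring
      _ = cm * ∑ j, u j * Real.log (u j) := by rw [hED]
      _ ≤ _ := h1
  · have h1 := Finset.sum_le_sum (fun j (_ : j ∈ Finset.univ) => keyU j)
    rw [hsublin] at h1
    unfold Delta21
    calc ∑ j, (u j)^2 * Real.log (u j)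
        ≤ cp * ∑ j, u j * Real.log (u j) := h1
      _ = cp * ((n:ℝ) * entropyDelta n u) := by rw [hED]
      _ = (3 * (1 + β) + 2 * (1 + β) * Real.log (1 + β)) * n * entropyDelta n u := by
          rw [hcp, hpdef]; ring
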